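/- Every permutation of {1,...,n} avoiding both patterns [2,3,1] and [3,1,2] is an involution, i.e., equals its own inverse (equivalently, all its cycles have length 1 or 2). -/

import Mathlib

/-- `π` contains the pattern `σ`. -/
def ContainsPattern {n k : ℕ} (π : Equiv.Perm (Fin n)) (σ : Equiv.Perm (Fin k)) : Prop :=
  ∃ f : Fin k ↪o Fin n, ∀ a b : Fin k, π (f a) < π (f b) ↔ σ a < σ b

lemma triple_pattern {n : ℕ} (π : Equiv.Perm (Fin n)) (σ : Equiv.Perm (Fin 3))
    (a b c : Fin n) (hab : a < b) (hbc : b < c)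
    (h : ∀ u v : Fin 3, π (![a,b,c] u) < π (![a,b,c] v) ↔ σ u < σ v) :
    ContainsPattern π σ := by
  refine ⟨OrderEmbedding.ofStrictMono ![a,b,c] ?_, h⟩
  intro u v huv
  fin_cases u <;> fin_cases v <;> simp_all <;> first | exact hab | exact hbc | exact hab.trans hbc | omega

lemma has231 {n : ℕ} (π : Equiv.Perm (Fin n)) (a b c : Fin n) (hab : a < b) (hbc : b < c)
    (hca : π c < π a) (hAB : π a < π b) : ContainsPattern π (finRotate 3) := by
  refine triple_pattern π _ a b c hab hbc ?_
  intro u v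
  have hac : π c < π b := hca.trans hAB
  fin_cases u <;> fin_cases v <;>
    simp only [Matrix.cons_val_zero, Matrix.cons_val_one, Matrix.head_cons, Fin.mk_one,
      Matrix.cons_val_two, Matrix.tail_cons] <;>
    constructor <;> intro h <;>
    first
      | decide
      | exact hAB | exact hca | exact hac
      | exact absurd h (lt_irrefl _)
      | exact absurd h (by decide)
      | exact absurd h (not_lt.2 hAB.le) | exact absurd h (not_lt.2 hca.le)
      | exact absurd h (not_lt.2 hac.le)

lemma has312 {n : ℕ} (π : Equiv.Perm (Fin n)) (a b c : Fin n) (hab : a < b) (hbc : b < c)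
    (hBC : π b < π c) (hca : π c < π a) : ContainsPattern π (finRotate 3)⁻¹ := by
  refine triple_pattern π _ a b c hab hbc ?_
  intro u v
  have hba : π b < π a := hBC.trans hca
  fin_cases u <;> fin_cases v <;>
    simp only [Matrix.cons_val_zero, Matrix.cons_val_one, Matrix.head_cons, Fin.mk_one,
      Matrix.cons_val_two, Matrix.tail_cons] <;>
    constructor <;> intro h <;>
    first
      | decide
      | exact hBC | exact hca | exact hba
      | exact absurd h (lt_irrefl _)
      | exact absurd h (by decide)
      | exact absurd h (not_lt.2 hBC.le) | exact absurd h (not_lt.2 hca.le)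
      | exact absurd h (not_lt.2 hba.le)

lemma inv_count {n : ℕ} (π : Equiv.Perm (Fin n))
    (h1 : ¬ ContainsPattern π (finRotate 3))
    (h2 : ¬ ContainsPattern π (finRotate 3)⁻¹)
    (i j : Fin n) (hij : i < j) (hv : π j < π i) :
    (j : ℕ) - i = (π i : ℕ) - (π j : ℕ) := by
  have hmaps : ∀ k ∈ Finset.Ioo i j, π k ∈ Finset.Ioo (π j) (π i) := by
    intro k hk
    rw [Finset.mem_Ioo] at hk ⊢
    obtain ⟨hik, hkj⟩ := hk
    constructor
    · by_contra hle
      have hne : π k ≠ π j := fun e => (hkj.ne (π.injective e)).elim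
      have : π k < π j := lt_of_le_of_ne (not_lt.1 hle) hne
      exact h2 (has312 π i k j hik hkj this hv)
    · by_contra hle
      have hne : π i ≠ π k := fun e => (hik.ne (π.injective e)).elim
      have : π i < π k := lt_of_le_of_ne (not_lt.1 hle) hne
      exact h1 (has231 π i k j hik hkj hv this)
  have hsurj : ∀ v ∈ Finset.Ioo (π j) (π i), ∃ k ∈ Finset.Ioo i j, π k = v := by
    intro v hv'
    rw [Finset.mem_Ioo] at hv'
    obtain ⟨hjv, hvi⟩ := hv'
    refine ⟨π⁻¹ v, ⟨?_, π.apply_symm_apply v⟩⟩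
    rw [Finset.mem_Ioo]
    set k := π⁻¹ v with hk
    have hπk : π k = v := π.apply_symm_apply v
    have hki : k ≠ i := fun e => (lt_irrefl _ (by rw [← e, hπk] at hvi; exact hvi)).elim
    have hkj : k ≠ j := fun e => (lt_irrefl _ (by rw [← e, hπk] at hjv; exact hjv)).elim
    constructor
    · rcases lt_or_ge i k with h | h
      · exact h
      · exfalso
        have hki' : k < i := lt_of_le_of_ne h hki
        exact h1 (has231 π k i j hki' hij (by rw [hπk]; exact hjv) (by rw [hπk]; exact hvi))
    · rcases lt_or_ge k j with h | h
      · exact h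
      · exfalso
        have hkj' : j < k := lt_of_le_of_ne h (Ne.symm hkj)
        exact h2 (has312 π i j k hij hkj' (by rw [hπk]; exact hjv) (by rw [hπk]; exact hvi))
  have hcard : (Finset.Ioo i j).card = (Finset.Ioo (π j) (π i)).card :=
    Finset.card_bij (fun k _ => π k) hmaps
      (fun a _ b _ h => π.injective h)
      (fun b hb => by obtain ⟨a, ha, he⟩ := hsurj b hb; exact ⟨a, ha, he⟩)
  rw [Fin.card_Ioo, Fin.card_Ioo] at hcard
  have := hij
  rw [Fin.lt_def] at this hv
  omega

lemma key_lemma {n : ℕ} (π : Equiv.Perm (Fin n))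
    (h1 : ¬ ContainsPattern π (finRotate 3))
    (h2 : ¬ ContainsPattern π (finRotate 3)⁻¹) :
    ∀ x : Fin n, x < π x → π (π x) = x := by
  suffices H : ∀ m : ℕ, ∀ x : Fin n, (x : ℕ) < m → x < π x → π (π x) = x by
    exact fun x => H ((x : ℕ) + 1) x (Nat.lt_succ_self _)
  intro m
  induction m with
  | zero => exact fun x hx => absurd hx (Nat.not_lt_zero _)
  | succ m ih =>
    intro x hxm hx
    set y := π x with hy
    set z := π y with hz
    rcases lt_trichotomy z y with hzy | hzy | hzy
    · -- counting case: z = x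
      have hcount := inv_count π h1 h2 x y hx (by rw [← hy, ← hz]; exact hzy)
      rw [← hy, ← hz] at hcount
      have h1' : (x : ℕ) < y := hx
      have h2' : (z : ℕ) < y := hzy
      have : (x : ℕ) = z := by omega
      exact (Fin.ext this).symm
    · exact absurd (π.injective (show π y = π x by rw [← hz, hzy, hy])) hx.ne'
    · -- y < z : derive contradiction
      exfalso
      set w := π⁻¹ x with hw
      have hπw : π w = x := π.apply_symm_apply x
      have hwx : w ≠ x := fun e => hx.ne (by rw [← hπw, e, ← hy])
      have hwy : w ≠ y := fun e => (hx.trans hzy).ne (by rw [← hπw, e, ← hz])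
      rcases lt_trichotomy w y with h' | h' | h'
      · rcases lt_trichotomy w x with h'' | h'' | h''
        · -- w < x: minimality
          have hwm : (w : ℕ) < m := by
            have := Fin.lt_def.1 h''
            omega
          have hwlt : w < π w := by rw [hπw]; exact h''
          have := ih w hwm hwlt
          rw [hπw, ← hy] at this
          exact (h''.trans hx).ne' this
        · exact hwx h''
        · -- x < w < y : counting gives w = y, contra
          have hcount := inv_count π h1 h2 x w h'' (by rw [hπw, ← hy]; exact hx)
          rw [hπw, ← hy] at hcount
          have a1 : (x : ℕ) < w := h''
          have a2 : (w : ℕ) < y := h'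
          have a3 : (x : ℕ) < y := hx
          omega
      · exact hwy h'
      · -- y < w : 231 pattern on (x, y, w)
        exact h1 (has231 π x y w hx h'
          (by rw [hπw, ← hy]; exact hx) (by rw [← hy, ← hz]; exact hzy))

lemma contains_inv {n k : ℕ} (π : Equiv.Perm (Fin n)) (σ : Equiv.Perm (Fin k)) :
    ContainsPattern π σ → ContainsPattern π⁻¹ σ⁻¹ := by
  rintro ⟨f, hf⟩
  have hmono : StrictMono (fun a => π (f (σ⁻¹ a))) := by
    intro a b hab
    rw [hf]
    simpa using hab
  refine ⟨OrderEmbedding.ofStrictMono _ hmono, ?_⟩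
  intro a b
  show π⁻¹ (π (f (σ⁻¹ a))) < π⁻¹ (π (f (σ⁻¹ b))) ↔ _
  rw [show ∀ y, π⁻¹ (π y) = y from π.symm_apply_apply, show ∀ y, π⁻¹ (π y) = y from π.symm_apply_apply]
  exact f.lt_iff_lt

/-- Every permutation avoiding the patterns `[2,3,1]` (i.e. `finRotate 3`) and
`[3,1,2]` (i.e. `(finRotate 3)⁻¹`) is an involution. -/
theorem avoids_231_312_involution (n : ℕ) (π : Equiv.Perm (Fin n))
    (h1 : ¬ ContainsPattern π (finRotate 3))
    (h2 : ¬ ContainsPattern π (finRotate 3)⁻¹) :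
    π⁻¹ = π := by
  have h1' : ¬ ContainsPattern π⁻¹ (finRotate 3) := fun hc => by
    have := contains_inv π⁻¹ (finRotate 3) hc
    rw [inv_inv] at this
    exact h2 this
  have h2' : ¬ ContainsPattern π⁻¹ (finRotate 3)⁻¹ := fun hc => by
    have := contains_inv π⁻¹ (finRotate 3)⁻¹ hc
    rw [inv_inv, inv_inv] at this
    exact h1 this
  have key1 := key_lemma π h1 h2
  have key2 := key_lemma π⁻¹ h1' h2'
  apply Equiv.ext
  intro x
  rcases lt_trichotomy x (π x) with h | h | h
  · have := key1 x h
    calc π⁻¹ x = π⁻¹ (π (π x)) := by rw [this]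
    _ = π x := π.symm_apply_apply _
  · have e : π⁻¹ x = x := by nth_rewrite 1 [h]; exact π.symm_apply_apply x
    rw [e]; exact h
  · have hlt : π x < π⁻¹ (π x) := by rw [show π⁻¹ (π x) = x from π.symm_apply_apply x]; exact h
    have := key2 (π x) hlt
    rw [show π⁻¹ (π x) = x from π.symm_apply_apply x] at this
    rw [this]
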